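/- arXiv:1302.6370 — 2 statements merged into one kernel-verified Lean document; each statement's English description precedes it below -/
import Mathlib

section
/- Let (X,d) be an ultrametric space, n ≥ 1, and G a subgroup of the symmetric group S_n. Then the formula θ_X([μ_1,…,μ_n]) = J_ω(π_{G,X})(μ_1 ⊗ ⋯ ⊗ μ_n) gives a well-defined map θ_X : SP^n_G(J_ω(X)) → J_ω(SP^n_G(X)) (its value does not depend on the choice of orbit representative (μ_1,…,μ_n)), and θ_X is nonexpanding. -/
open scoped ENNReal

noncomputable section

/-- A metric is an *ultrametric* if the strong triangle inequality holds. -/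
def IsUltra (X : Type*) [MetricSpace X] : Prop :=
  ∀ x y z : X, dist x y ≤ max (dist x z) (dist z y)

/-- `mmOf x α` is the max-min functional `∨ᵢ αᵢ ∧ δ_{x i}`,
`φ ↦ maxᵢ min (α i) (φ (x i))` (computed in the extended reals). -/
def mmOf {A : Type*} {n : ℕ} (x : Fin (n + 1) → A) (α : Fin (n + 1) → EReal) :
    (A → ℝ) → ℝ :=
  fun φ => (⨆ i, min (α i) ((φ (x i) : EReal))).toReal

/-- `μ` is a max-min measure of finite support, with support contained in `S`. -/
def IsMMOn {A : Type*} (S : Set A) (μ : (A → ℝ) → ℝ) : Prop :=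
  ∃ (n : ℕ) (x : Fin (n + 1) → A) (α : Fin (n + 1) → EReal),
    (∀ i, x i ∈ S) ∧ (∃ i, α i = ⊤) ∧ μ = mmOf x α

/-- `μ` is a max-min measure of finite support. -/
def IsMM {A : Type*} (μ : (A → ℝ) → ℝ) : Prop :=
  IsMMOn Set.univ μ

/-- `idemOf x α` is the idempotent measure `∨ᵢ αᵢ ⊙ δ_{x i}`,
`φ ↦ maxᵢ (α i + φ (x i))` (computed in the extended reals). -/
def idemOf {A : Type*} {n : ℕ} (x : Fin (n + 1) → A) (α : Fin (n + 1) → EReal) :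
    (A → ℝ) → ℝ :=
  fun φ => (⨆ i, (α i + (φ (x i) : EReal))).toReal

/-- `μ` is an idempotent measure of finite support, with support contained in `S`. -/
def IsIdemOn {A : Type*} (S : Set A) (μ : (A → ℝ) → ℝ) : Prop :=
  ∃ (n : ℕ) (x : Fin (n + 1) → A) (α : Fin (n + 1) → EReal),
    (∀ i, x i ∈ S) ∧ (∀ i, α i ≤ 0) ∧ (∃ i, α i = 0) ∧ μ = idemOf x α

/-- `μ` is an idempotent measure of finite support. -/
def IsIdem {A : Type*} (μ : (A → ℝ) → ℝ) : Prop :=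
  IsIdemOn Set.univ μ

/-- The Dirac measure `δ_a`. -/
def dirac {A : Type*} (a : A) : (A → ℝ) → ℝ := fun φ => φ a

/-- `FrE e r φ`: the function `φ` is constant on every open `r`-ball of the
(extended-valued) distance `e`; this is the family `𝓕_r`. -/
def FrE {A : Type*} (e : A → A → ℝ≥0∞) (r : ℝ≥0∞) (φ : A → ℝ) : Prop :=
  ∀ x y : A, e x y < r → φ x = φ y

/-- The ultrametric `d̂` on functionals:
`d̂(μ,ν) = inf {r > 0 ∣ μ φ = ν φ for every φ ∈ 𝓕_r}`. -/
def dHatE {A : Type*} (e : A → A → ℝ≥0∞) (μ ν : (A → ℝ) → ℝ) : ℝ≥0∞ :=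
  sInf {r : ℝ≥0∞ | 0 < r ∧ ∀ φ : A → ℝ, FrE e r φ → μ φ = ν φ}

/-- The pushforward `J_ω(f)` of functionals along `f`. -/
def Jmap {A B : Type*} (f : A → B) (μ : (A → ℝ) → ℝ) : (B → ℝ) → ℝ :=
  fun φ => μ (φ ∘ f)

/-- The extended distance of a metric space, as a two-variable function. -/
def eD (X : Type*) [PseudoEMetricSpace X] : X → X → ℝ≥0∞ :=
  fun x y => edist x y

/-- The monad multiplication (`ξ` for max-min measures, `ζ` for idempotent
measures): `mult M φ = M (μ ↦ μ φ)`. -/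
def mult {A : Type*} (M : (((A → ℝ) → ℝ) → ℝ) → ℝ) : (A → ℝ) → ℝ :=
  fun φ => M fun μ => μ φ


/-- The `n`-fold tensor product `μ₁ ⊗ ⋯ ⊗ μₙ ∈ J_ω(Xⁿ)`: for max-min measures
`μₖ = ∨_{iₖ} α^k_{iₖ} ∧ δ_{x^k_{iₖ}}` this is
`φ ↦ max_{i₁,…,iₙ} min (α^1_{i₁}, …, α^n_{iₙ}, φ(x^1_{i₁},…,x^n_{iₙ}))`. -/
def tensorN {X : Type*} : (n : ℕ) → (Fin n → ((X → ℝ) → ℝ)) →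
    ((Fin n → X) → ℝ) → ℝ
  | 0, _, φ => φ Fin.elim0
  | n + 1, μ, φ =>
      μ 0 fun a => tensorN n (fun i => μ i.succ) fun v => φ (Fin.cons a v)


section ThetaAux

variable {X : Type*}

lemma ereal_iInf_fin_succ {n : ℕ} (f : Fin (n + 1) → EReal) :
    ⨅ i, f i = min (f 0) (⨅ i : Fin n, f i.succ) := by
  refine le_antisymm (le_min (iInf_le _ 0) (le_iInf fun i => iInf_le _ i.succ)) (le_iInf ?_)
  intro i
  induction i using Fin.cases with
  | zero => exact min_le_left _ _
  | succ i => exact (min_le_right _ _).trans (iInf_le _ i)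

/-- The value of the `n`-fold tensor product of max-min measures, as an
extended real: `sup_j min (inf_i α_i(j_i)) (φ (x·j))`. -/
def bigMMval {n : ℕ} (m : Fin n → ℕ) (x : ∀ i, Fin (m i + 1) → X)
    (α : ∀ i, Fin (m i + 1) → EReal) (φ : (Fin n → X) → ℝ) : EReal :=
  ⨆ j : ∀ i, Fin (m i + 1),
    min (⨅ i, α i (j i)) ((φ (fun i => x i (j i)) : ℝ) : EReal)

lemma bigMMval_ne_top {n : ℕ} (m : Fin n → ℕ) (x : ∀ i, Fin (m i + 1) → X)
    (α : ∀ i, Fin (m i + 1) → EReal) (φ : (Fin n → X) → ℝ) :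
    bigMMval m x α φ ≠ ⊤ := by
  have hB : bigMMval m x α φ ≤
      ((Finset.univ.sup' ⟨Classical.arbitrary _, Finset.mem_univ _⟩
        (fun j : ∀ i, Fin (m i + 1) => φ (fun i => x i (j i))) : ℝ) : EReal) := by
    refine iSup_le fun j => (min_le_right _ _).trans ?_
    exact EReal.coe_le_coe_iff.mpr
      (Finset.le_sup' (f := fun j : ∀ i, Fin (m i + 1) => φ (fun i => x i (j i)))
        (Finset.mem_univ j))
  exact (hB.trans_lt (EReal.coe_lt_top _)).ne

lemma bigMMval_ne_bot {n : ℕ} (m : Fin n → ℕ) (x : ∀ i, Fin (m i + 1) → X)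
    (α : ∀ i, Fin (m i + 1) → EReal) (htop : ∀ i, ∃ k, α i k = ⊤)
    (φ : (Fin n → X) → ℝ) : bigMMval m x α φ ≠ ⊥ := by
  choose k hk using htop
  have h1 : (⨅ i, α i (k i)) = ⊤ := iInf_eq_top.mpr hk
  have h2 : ((φ (fun i => x i (k i)) : ℝ) : EReal) ≤ bigMMval m x α φ := by
    have := le_iSup (fun j : ∀ i, Fin (m i + 1) =>
      min (⨅ i, α i (j i)) ((φ (fun i => x i (j i)) : ℝ) : EReal)) k
    rwa [h1, min_eq_right le_top] at this
  exact ((EReal.bot_lt_coe _).trans_le h2).ne'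

lemma min_iSup_ereal {ι : Sort*} [Nonempty ι] (a : EReal) (f : ι → EReal) :
    min a (⨆ i, f i) = ⨆ i, min a (f i) := by
  simpa [min] using inf_iSup_eq a f

/-- Explicit formula for the tensor product of max-min measures. -/
lemma tensorN_mm_eq : ∀ (n : ℕ) (m : Fin n → ℕ) (x : ∀ i, Fin (m i + 1) → X)
    (α : ∀ i, Fin (m i + 1) → EReal), (∀ i, ∃ k, α i k = ⊤) →
    ∀ φ : (Fin n → X) → ℝ,
      tensorN n (fun i => mmOf (x i) (α i)) φ = (bigMMval m x α φ).toReal := by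
  intro n
  induction n with
  | zero =>
    intro m x α _ φ
    have h1 : bigMMval m x α φ = ((φ Fin.elim0 : ℝ) : EReal) := by
      unfold bigMMval
      rw [iSup_unique, iInf_of_empty, min_eq_right le_top]
      exact congrArg (fun v => ((φ v : ℝ) : EReal)) (funext fun i => i.elim0)
    rw [h1, EReal.toReal_coe]
    rfl
  | succ n ih =>
    intro m x α htop φ
    have htop' : ∀ i : Fin n, ∃ k, α i.succ k = ⊤ := fun i => htop i.succ
    set S : X → EReal := fun a =>
      bigMMval (fun i => m i.succ) (fun i => x i.succ) (fun i => α i.succ)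
        (fun v => φ (Fin.cons a v)) with hS
    have hinner : ∀ a : X,
        tensorN n (fun i => mmOf (x i.succ) (α i.succ)) (fun v => φ (Fin.cons a v))
          = (S a).toReal := fun a => ih _ _ _ htop' _
    have hcoe : ∀ a, (((S a).toReal : ℝ) : EReal) = S a := fun a =>
      EReal.coe_toReal (bigMMval_ne_top _ _ _ _) (bigMMval_ne_bot _ _ _ htop' _)
    have step1 : tensorN (n + 1) (fun i => mmOf (x i) (α i)) φ
        = (⨆ k, min (α 0 k) (S (x 0 k))).toReal := by
      show mmOf (x 0) (α 0) (fun a =>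
        tensorN n (fun i => mmOf (x i.succ) (α i.succ)) (fun v => φ (Fin.cons a v))) = _
      rw [show (fun a => tensorN n (fun i => mmOf (x i.succ) (α i.succ))
          (fun v => φ (Fin.cons a v))) = fun a => (S a).toReal from funext hinner]
      unfold mmOf
      congr 1
      exact iSup_congr fun k => by rw [hcoe]
    rw [step1]
    congr 1
    have hdist : ∀ k : Fin (m 0 + 1), min (α 0 k) (S (x 0 k))
        = ⨆ j' : ∀ i : Fin n, Fin (m i.succ + 1),
            min (⨅ i : Fin (n + 1), α i (Fin.cons (α := fun i => Fin (m i + 1)) k j' i))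
              ((φ (fun i => x i (Fin.cons (α := fun i => Fin (m i + 1)) k j' i)) : ℝ) : EReal) := by
      intro k
      rw [hS]
      unfold bigMMval
      rw [min_iSup_ereal]
      refine iSup_congr fun j' => ?_
      rw [← min_assoc]
      congr 1
      · rw [ereal_iInf_fin_succ (fun i => α i (Fin.cons (α := fun i => Fin (m i + 1)) k j' i))]
        congr 1
      · congr 1
        refine congrArg φ (funext ?_)
        intro i
        induction i using Fin.cases with
        | zero => rfl
        | succ i => rfl
    rw [iSup_congr hdist]
    unfold bigMMval
    refine le_antisymm (iSup_le fun k => iSup_le fun j' =>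
      le_iSup (fun j : ∀ i, Fin (m i + 1) =>
        min (⨅ i, α i (j i)) ((φ (fun i => x i (j i)) : ℝ) : EReal))
        (Fin.cons (α := fun i => Fin (m i + 1)) k j')) (iSup_le fun j => ?_)
    have hj : Fin.cons (α := fun i => Fin (m i + 1)) (j 0) (fun i => j i.succ) = j :=
      Fin.cons_self_tail j
    calc min (⨅ i, α i (j i)) ((φ (fun i => x i (j i)) : ℝ) : EReal)
        = min (⨅ i, α i (Fin.cons (α := fun i => Fin (m i + 1)) (j 0) (fun i => j i.succ) i))
            ((φ (fun i => x i (Fin.cons (α := fun i => Fin (m i + 1)) (j 0) (fun i => j i.succ) i)) : ℝ) : EReal) := by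
          rw [hj]
      _ ≤ _ := le_iSup₂ (f := fun (k : Fin (m 0 + 1)) (j' : ∀ i : Fin n, Fin (m i.succ + 1)) =>
            min (⨅ i : Fin (n + 1), α i (Fin.cons (α := fun i => Fin (m i + 1)) k j' i))
              ((φ (fun i => x i (Fin.cons (α := fun i => Fin (m i + 1)) k j' i)) : ℝ) : EReal))
            (j 0) (fun i => j i.succ)

/-- Permutation invariance of the tensor product of max-min measures. -/
lemma tensorN_perm {n : ℕ} (σ : Equiv.Perm (Fin n)) (m : Fin n → ℕ)
    (x : ∀ i, Fin (m i + 1) → X) (α : ∀ i, Fin (m i + 1) → EReal)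
    (htop : ∀ i, ∃ k, α i k = ⊤) (ψ : (Fin n → X) → ℝ)
    (hψ : ∀ v : Fin n → X, ψ (fun i => v (σ i)) = ψ v) :
    tensorN n (fun i => mmOf (x (σ i)) (α (σ i))) ψ
      = tensorN n (fun i => mmOf (x i) (α i)) ψ := by
  rw [tensorN_mm_eq n (fun i => m (σ i)) (fun i => x (σ i)) (fun i => α (σ i))
      (fun i => htop (σ i)) ψ, tensorN_mm_eq n m x α htop ψ]
  congr 1
  unfold bigMMval
  let E : (∀ i, Fin (m i + 1)) ≃ (∀ i, Fin (m (σ i) + 1)) :=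
    Equiv.piCongrLeft' (fun i => Fin (m i + 1)) σ.symm
  rw [← E.iSup_comp]
  refine iSup_congr fun j => ?_
  have h1 : (⨅ i, α (σ i) (E j i)) = ⨅ i, α i (j i) :=
    Equiv.iInf_comp σ (g := fun i => α i (j i))
  have h2 : ψ (fun i => x (σ i) (E j i)) = ψ (fun i => x i (j i)) :=
    hψ (fun i => x i (j i))
  rw [h1, h2]

/-- If the factors agree on all functions in `𝓕_r` and `Ψ` is constant on open
`r`-balls of the sup-metric, then the tensor products agree on `Ψ`. -/
lemma tensorN_agree [MetricSpace X] {r : ℝ≥0∞} :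
    ∀ (n : ℕ) (μ ν : Fin n → ((X → ℝ) → ℝ)),
      (∀ i (ψ : X → ℝ), FrE (eD X) r ψ → μ i ψ = ν i ψ) →
      ∀ Ψ : (Fin n → X) → ℝ,
        (∀ v w : Fin n → X, (⨆ i, edist (v i) (w i)) < r → Ψ v = Ψ w) →
        tensorN n μ Ψ = tensorN n ν Ψ := by
  intro n
  induction n with
  | zero => intro μ ν _ Ψ _; rfl
  | succ n ih =>
    intro μ ν h Ψ hΨ
    show μ 0 (fun a => tensorN n (fun i => μ i.succ) fun v => Ψ (Fin.cons a v))
       = ν 0 (fun a => tensorN n (fun i => ν i.succ) fun v => Ψ (Fin.cons a v))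
    have hinner : ∀ a : X,
        (tensorN n (fun i => μ i.succ) fun v => Ψ (Fin.cons a v))
          = tensorN n (fun i => ν i.succ) fun v => Ψ (Fin.cons a v) := by
      intro a
      refine ih _ _ (fun i ψ hψ => h i.succ ψ hψ) _ ?_
      intro v w hvw
      refine hΨ _ _ (lt_of_le_of_lt (iSup_le ?_) hvw)
      intro i
      induction i using Fin.cases with
      | zero => simp
      | succ i => simpa using le_iSup (fun i => edist (v i) (w i)) i
    rw [funext hinner]
    refine h 0 _ ?_
    intro a b hab
    have hfun : (fun v => Ψ (Fin.cons a v)) = fun v => Ψ (Fin.cons b v) := by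
      funext v
      refine hΨ _ _ (lt_of_le_of_lt (iSup_le ?_) hab)
      intro i
      induction i using Fin.cases with
      | zero => simp [eD]
      | succ i => simp
    exact congrArg (tensorN n fun i => ν i.succ) hfun

end ThetaAux

/-- For an ultrametric space `(X,d)`, `n ≥ 1` and a subgroup
`G ≤ Sₙ`, the formula `θ_X([μ₁,…,μₙ]) = J_ω(π_{G,X})(μ₁ ⊗ ⋯ ⊗ μₙ)` gives a
well-defined map `θ_X : SPⁿ_G(J_ω(X)) → J_ω(SPⁿ_G(X))` (its value does not
depend on the chosen orbit representative), and `θ_X` is nonexpanding with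
respect to the quotient ultrametric
`d̃([x],[y]) = min_{σ ∈ G} max_i d(xᵢ, y_{σ(i)})`. -/
theorem theta_well_defined_and_nonexpanding {X : Type*} [MetricSpace X]
    (hX : IsUltra X) {n : ℕ} (hn : 1 ≤ n) (G : Subgroup (Equiv.Perm (Fin n)))
    {Q : Type*} (π : (Fin n → X) → Q)
    (hπ : ∀ x y : Fin n → X, π x = π y ↔ ∃ σ ∈ G, ∀ i, y i = x (σ i))
    (eQ : Q → Q → ℝ≥0∞)
    (heQ : ∀ x y : Fin n → X,
      eQ (π x) (π y) = ⨅ σ ∈ G, ⨆ i, edist (x i) (y (σ i))) :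
    (∀ μ ν : Fin n → ((X → ℝ) → ℝ),
      (∀ i, IsMM (μ i)) → (∀ i, IsMM (ν i)) →
      (∃ σ ∈ G, ∀ i, ν i = μ (σ i)) →
      Jmap π (tensorN n μ) = Jmap π (tensorN n ν)) ∧
    (∀ μ ν : Fin n → ((X → ℝ) → ℝ),
      (∀ i, IsMM (μ i)) → (∀ i, IsMM (ν i)) →
      dHatE eQ (Jmap π (tensorN n μ)) (Jmap π (tensorN n ν)) ≤
        ⨅ σ ∈ G, ⨆ i, dHatE (eD X) (μ i) (ν (σ i))) := by
  have part1 : ∀ μ ν : Fin n → ((X → ℝ) → ℝ),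
      (∀ i, IsMM (μ i)) → (∀ i, IsMM (ν i)) →
      (∃ σ ∈ G, ∀ i, ν i = μ (σ i)) →
      Jmap π (tensorN n μ) = Jmap π (tensorN n ν) := by
    rintro μ ν hμ hν ⟨σ, hσG, hσ⟩
    have hμ' : ∀ i, ∃ (k : ℕ) (x : Fin (k + 1) → X) (α : Fin (k + 1) → EReal),
        (∀ l, x l ∈ Set.univ) ∧ (∃ l, α l = ⊤) ∧ μ i = mmOf x α := hμ
    choose m x α hmem htop hrep using hμ'
    funext φ
    show tensorN n μ (φ ∘ π) = tensorN n ν (φ ∘ π)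
    have hμeq : μ = fun i => mmOf (x i) (α i) := funext hrep
    have hνeq : ν = fun i => mmOf (x (σ i)) (α (σ i)) :=
      funext fun i => (hσ i).trans (hrep (σ i))
    rw [hμeq, hνeq]
    refine (tensorN_perm σ m x α htop (φ ∘ π) ?_).symm
    intro v
    show φ (π (fun i => v (σ i))) = φ (π v)
    exact (congrArg φ ((hπ v (fun i => v (σ i))).mpr ⟨σ, hσG, fun i => rfl⟩)).symm
  refine ⟨part1, ?_⟩
  intro μ ν hμ hν
  refine le_iInf₂ fun σ hσG => ?_
  have hrw : Jmap π (tensorN n ν) = Jmap π (tensorN n (fun i => ν (σ i))) :=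
    part1 ν (fun i => ν (σ i)) hν (fun i => hν (σ i)) ⟨σ, hσG, fun i => rfl⟩
  rw [hrw]
  refine le_of_forall_gt_imp_ge_of_dense fun r hr => ?_
  refine sInf_le ⟨lt_of_le_of_lt zero_le hr, ?_⟩
  intro φ hφ
  show tensorN n μ (φ ∘ π) = tensorN n (fun i => ν (σ i)) (φ ∘ π)
  have hagree : ∀ i (ψ : X → ℝ), FrE (eD X) r ψ → μ i ψ = ν (σ i) ψ := by
    intro i
    have hi : dHatE (eD X) (μ i) (ν (σ i)) < r :=
      lt_of_le_of_lt (le_iSup (fun i => dHatE (eD X) (μ i) (ν (σ i))) i) hr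
    obtain ⟨s, ⟨hs0, hs⟩, hsr⟩ := sInf_lt_iff.mp hi
    exact fun ψ hψ => hs ψ (fun a b hab => hψ a b (hab.trans hsr))
  refine tensorN_agree n μ (fun i => ν (σ i)) hagree (φ ∘ π) ?_
  intro v w hvw
  show φ (π v) = φ (π w)
  refine hφ (π v) (π w) ?_
  rw [heQ v w]
  refine lt_of_le_of_lt ?_ hvw
  refine iInf₂_le_of_le 1 G.one_mem ?_
  simp

end
end

section
/- Let (X,d) be an ultrametric space. Then: (i) supp(δ_x) = {x} for every x ∈ X; and (ii) for every M ∈ J_ω(J_ω(X)), supp(ξ_X(M)) = ⋃{supp(μ) : μ ∈ supp(M)}; that is, the support maps constitute a morphism of the monad (J_ω, δ, ξ) into the hyperspace monad (whose unit is the singleton map x ↦ {x} and whose multiplication is the union map). -/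
open scoped ENNReal

noncomputable section

/-- `S` is *the* support of the functional `μ`: `S` is finite, `μ` depends
only on the restriction of its argument to `S`, and `S` is contained in any
finite set with this property. -/
def IsSupportOf {A : Type*} (μ : (A → ℝ) → ℝ) (S : Set A) : Prop :=
  S.Finite ∧
  (∀ φ ψ : A → ℝ, Set.EqOn φ ψ S → μ φ = μ ψ) ∧
  ∀ T : Set A, T.Finite → (∀ φ ψ : A → ℝ, Set.EqOn φ ψ T → μ φ = μ ψ) →
    S ⊆ T

section Aux

/-- `mm'` is `mmOf` with arbitrary index type. -/
def mm' {A : Type*} {ι : Type*} (x : ι → A) (α : ι → EReal) : (A → ℝ) → ℝ :=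
  fun φ => (⨆ i, min (α i) ((φ (x i) : EReal))).toReal

lemma mmOf_eq_mm' {A : Type*} {n : ℕ} (x : Fin (n + 1) → A) (α : Fin (n + 1) → EReal) :
    mmOf x α = mm' x α := rfl

lemma ereal_min_iSup {ι : Type*} (a : EReal) (f : ι → EReal) :
    min a (⨆ i, f i) = ⨆ i, min a (f i) := by
  apply le_antisymm
  · rcases le_or_gt (⨆ i, f i) a with h | h
    · rw [min_eq_right h]
      exact iSup_mono fun i => le_min ((le_iSup f i).trans h) le_rfl
    · obtain ⟨i, hi⟩ := lt_iSup_iff.mp h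
      rw [min_eq_left h.le]
      exact le_iSup_of_le i (le_min le_rfl hi.le)
  · exact iSup_le fun i => min_le_min le_rfl (le_iSup f i)

lemma ereal_min_ne_bot {a b : EReal} : min a b ≠ ⊥ ↔ a ≠ ⊥ ∧ b ≠ ⊥ := by
  constructor
  · intro h
    exact ⟨fun ha => h (by simp [ha]), fun hb => h (by simp [hb])⟩
  · rintro ⟨ha, hb⟩ h
    rcases le_total a b with hab | hab
    · exact ha (by rwa [min_eq_left hab] at h)
    · exact hb (by rwa [min_eq_right hab] at h)

lemma mm'_coe {A ι : Type*} [Fintype ι] [Nonempty ι]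
    (x : ι → A) (α : ι → EReal) (htop : ∃ i, α i = ⊤) (φ : A → ℝ) :
    ((mm' x α φ : ℝ) : EReal) = ⨆ i, min (α i) ((φ (x i) : EReal)) := by
  obtain ⟨i₀, h₀⟩ := htop
  set s := ⨆ i, min (α i) ((φ (x i) : EReal)) with hs
  have hb : ((φ (x i₀) : ℝ) : EReal) ≤ s := by
    have := le_iSup (fun i => min (α i) ((φ (x i) : EReal))) i₀
    simpa [h₀] using this
  have hne_bot : s ≠ ⊥ := fun h => by simp [h] at hb
  have hne_top : s ≠ ⊤ := by
    set c := Finset.univ.sup' Finset.univ_nonempty (fun i => φ (x i)) with hc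
    have hle : s ≤ (c : EReal) := iSup_le fun i =>
      (min_le_right _ _).trans (EReal.coe_le_coe_iff.mpr
        (Finset.le_sup' (fun i => φ (x i)) (Finset.mem_univ i)))
    exact fun h => by simp [h] at hle
  rw [mm']
  exact EReal.coe_toReal hne_top hne_bot

lemma isSupportOf_mm' {A ι : Type*} [Fintype ι] [Nonempty ι]
    (x : ι → A) (α : ι → EReal) (htop : ∃ i, α i = ⊤) :
    IsSupportOf (mm' x α) {a | ∃ i, x i = a ∧ α i ≠ ⊥} := by
  refine ⟨?_, ?_, ?_⟩
  · exact (Set.finite_range x).subset (fun a ⟨i, hi, _⟩ => ⟨i, hi⟩)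
  · intro φ ψ h
    unfold mm'
    congr 1
    refine iSup_congr fun i => ?_
    by_cases hα : α i = ⊥
    · simp [hα]
    · rw [h (⟨i, rfl, hα⟩ : x i ∈ {a | ∃ i, x i = a ∧ α i ≠ ⊥})]
  · intro T hTfin hT a ha
    classical
    obtain ⟨i₀, hx₀, hα₀⟩ := ha
    by_contra haT
    obtain ⟨c, -, hc⟩ := EReal.exists_between_coe_real (Ne.bot_lt hα₀)
    obtain ⟨i₁, h₁⟩ := htop
    set φ : A → ℝ := fun z => if z = a then c else c - 1 with hφ
    set ψ : A → ℝ := fun _ => c - 1 with hψ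
    have heq : Set.EqOn φ ψ T := fun z hz => by
      have : z ≠ a := fun h => haT (h ▸ hz)
      simp [hφ, hψ, this]
    have h1 : mm' x α ψ = c - 1 := by
      have : (⨆ i, min (α i) ((ψ (x i) : EReal))) = ((c - 1 : ℝ) : EReal) := by
        apply le_antisymm
        · exact iSup_le fun i => min_le_right _ _
        · refine le_iSup_of_le i₁ ?_
          simp [h₁, hψ]
      rw [mm', this, EReal.toReal_coe]
    have h2 : mm' x α φ = c := by
      have : (⨆ i, min (α i) ((φ (x i) : EReal))) = ((c : ℝ) : EReal) := by
        apply le_antisymm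
        · refine iSup_le fun i => (min_le_right _ _).trans ?_
          rw [EReal.coe_le_coe_iff, hφ]
          by_cases h : x i = a
          · simp [h]
          · simp only [if_neg h]; linarith
        · refine le_iSup_of_le i₀ ?_
          have hφa : φ (x i₀) = c := by rw [hx₀, hφ]; simp
          rw [hφa]
          exact le_min hc.le le_rfl
      rw [mm', this, EReal.toReal_coe]
    have := hT φ ψ heq
    rw [h1, h2] at this
    linarith

lemma IsSupportOf.unique {A : Type*} {μ : (A → ℝ) → ℝ} {S T : Set A}
    (h1 : IsSupportOf μ S) (h2 : IsSupportOf μ T) : S = T :=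
  subset_antisymm (h1.2.2 T h2.1 h2.2.1) (h2.2.2 S h1.1 h1.2.1)

lemma isSupportOf_dirac' {A : Type*} (a : A) : IsSupportOf (dirac a) {a} := by
  classical
  refine ⟨Set.finite_singleton a, fun φ ψ h => h rfl, fun T hTf hT => ?_⟩
  intro z hz
  rw [Set.mem_singleton_iff] at hz; subst hz
  by_contra hzT
  have := hT (fun w => if w = z then 1 else 0) (fun _ => 0)
    (fun w hw => by have hwz : w ≠ z := fun h => hzT (h ▸ hw); simp [hwz])
  simp [dirac] at this

lemma mult_mm' {X : Type*} {ι : Type*} {κ : ι → Type*}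
    [∀ i, Fintype (κ i)] [∀ i, Nonempty (κ i)]
    (y : ∀ i, κ i → X) (β : ∀ i, κ i → EReal) (α : ι → EReal)
    (hβ : ∀ i, ∃ j, β i j = ⊤) :
    mult (mm' (fun i => mm' (y i) (β i)) α)
      = mm' (fun p : Σ i, κ i => y p.1 p.2) (fun p : Σ i, κ i => min (α p.1) (β p.1 p.2)) := by
  funext φ
  show (⨆ i, min (α i) (((mm' (y i) (β i) φ : ℝ)) : EReal)).toReal
      = (⨆ p : Σ i, κ i, min (min (α p.1) (β p.1 p.2)) ((φ (y p.1 p.2) : EReal))).toReal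
  congr 1
  rw [iSup_sigma]
  refine iSup_congr fun i => ?_
  rw [mm'_coe (y i) (β i) (hβ i) φ, ereal_min_iSup]
  exact (iSup_congr fun j => (min_assoc _ _ _).symm)

end Aux

/-- The support maps constitute a morphism of the monad
`(J_ω, δ, ξ)` into the hyperspace monad: (i) `supp(δ_x) = {x}`, and
(ii) for `M ∈ J_ω(J_ω(X))`, `supp(ξ_X(M)) = ⋃ {supp(μ) ∣ μ ∈ supp(M)}`. -/
theorem supp_monad_morphism {X : Type*} [MetricSpace X] (hX : IsUltra X) :
    (∀ x : X, IsSupportOf (dirac x) {x}) ∧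
    (∀ M : (((X → ℝ) → ℝ) → ℝ) → ℝ, IsMMOn {μ | IsMM μ} M →
      ∀ (S : Set ((X → ℝ) → ℝ)) (s : ((X → ℝ) → ℝ) → Set X),
        IsSupportOf M S → (∀ μ ∈ S, IsSupportOf μ (s μ)) →
        IsSupportOf (mult M) (⋃ μ ∈ S, s μ)) := by
  constructor
  · exact isSupportOf_dirac'
  · intro M hM S s hS hs
    obtain ⟨m, μs, α, hmem, htop, hMeq⟩ := hM
    have hinner : ∀ i, ∃ (n : ℕ) (y : Fin (n + 1) → X) (β : Fin (n + 1) → EReal),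
        (∃ j, β j = ⊤) ∧ μs i = mm' y β := by
      intro i
      obtain ⟨n, y, β, -, hβt, heq⟩ := hmem i
      exact ⟨n, y, β, hβt, heq⟩
    choose n y β hβ hμeq using hinner
    have hμs : μs = fun i => mm' (y i) (β i) := funext hμeq
    have hMkey : IsSupportOf M {ν | ∃ i, μs i = ν ∧ α i ≠ ⊥} := by
      rw [hMeq, mmOf_eq_mm']
      exact isSupportOf_mm' μs α htop
    have hSeq : S = {ν | ∃ i, μs i = ν ∧ α i ≠ ⊥} := hS.unique hMkey
    have hsμ : ∀ i, μs i ∈ S → s (μs i) = {a | ∃ j, y i j = a ∧ β i j ≠ ⊥} := by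
      intro i hi
      refine (hs _ hi).unique ?_
      rw [hμeq i]
      exact isSupportOf_mm' (y i) (β i) (hβ i)
    have hmult : IsSupportOf (mult M)
        {a | ∃ p : Σ i : Fin (m + 1), Fin (n i + 1),
          y p.1 p.2 = a ∧ min (α p.1) (β p.1 p.2) ≠ ⊥} := by
      rw [hMeq, mmOf_eq_mm', hμs, mult_mm' y β α hβ]
      obtain ⟨i₁, h₁⟩ := htop
      obtain ⟨j₁, h₂⟩ := hβ i₁
      exact isSupportOf_mm' _ _ ⟨⟨i₁, j₁⟩, by simp [h₁, h₂]⟩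
    have hseteq : {a | ∃ p : Σ i : Fin (m + 1), Fin (n i + 1),
          y p.1 p.2 = a ∧ min (α p.1) (β p.1 p.2) ≠ ⊥} = ⋃ μ ∈ S, s μ := by
      ext a
      simp only [Set.mem_iUnion, Set.mem_setOf_eq, exists_prop]
      constructor
      · rintro ⟨⟨i, j⟩, hya, hne⟩
        rw [ereal_min_ne_bot] at hne
        have hμS : μs i ∈ S := by rw [hSeq]; exact ⟨i, rfl, hne.1⟩
        refine ⟨μs i, hμS, ?_⟩
        rw [hsμ i hμS]
        exact ⟨j, hya, hne.2⟩
      · rintro ⟨μ, hμS, haμ⟩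
        have hμS' := hμS
        rw [hSeq] at hμS'
        obtain ⟨i, hμi, hαne⟩ := hμS'
        rw [← hμi, hsμ i (hμi ▸ hμS)] at haμ
        obtain ⟨j, hya, hβne⟩ := haμ
        exact ⟨⟨i, j⟩, hya, ereal_min_ne_bot.mpr ⟨hαne, hβne⟩⟩
    rw [hseteq] at hmult
    exact hmult

end
end
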